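/- Let D = AB be a bounded operator on X = span{y} ⊕ span{Cy} ⊕ (ker φ ∩ ker C*φ) with matrix (d_ij), and suppose [A,B] is the matrix unit E₁₂ (i.e., [A,B]y = 0, [A,B](Cy) = y, [A,B] = 0 on ker φ ∩ ker C*φ). If rank[AB, BA] ≤ 1, where BA = AB − [A,B], then d₂₁ = 0 and moreover d₂₃ = 0 or d₃₁ = 0. -/
import Mathlib


theorem stmt_17 {X : Type*} [NormedAddCommGroup X] [NormedSpace ℂ X] [CompleteSpace X]
    (A B C : X →L[ℂ] X) (y : X) (φ : X →L[ℂ] ℂ)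
    (h0 : φ y = 0) (h1 : φ (C y) = 1)
    (hAB : A * B - B * A = φ.smulRight y)
    (hrank : LinearMap.rank
      (((A * B) * (B * A) - (B * A) * (A * B) : X →L[ℂ] X) : X →ₗ[ℂ] X) ≤ 1) :
    φ ((A * B) y) = 0 ∧
    ((∀ x : X, φ x = 0 → φ (C x) = 0 → φ ((A * B) x) = 0) ∨
      (A * B) y ∈ Submodule.span ℂ {y}) := by
  set D := A * B with hD
  have hBA : B * A = D - φ.smulRight y := by rw [← hAB, sub_sub_cancel]
  set K : X →ₗ[ℂ] X :=
    ((D * (B * A) - (B * A) * D : X →L[ℂ] X) : X →ₗ[ℂ] X) with hKdef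
  have hK : ∀ x : X, K x = φ (D x) • y - φ x • D y := by
    intro x
    simp [hKdef, hBA, ContinuousLinearMap.coe_coe, ContinuousLinearMap.sub_apply,
      ContinuousLinearMap.mul_apply, ContinuousLinearMap.smulRight_apply, map_sub, map_smul,
      smul_sub, sub_sub_sub_cancel_left]
  have hy0 : y ≠ 0 := by
    intro h
    rw [h] at h1
    simp at h1
  -- rank ≤ 1 gives dependence of any two elements of the range
  obtain ⟨v₀, hv₀⟩ := rank_le_one_iff.mp hrank
  have hdep : ∀ u v : X, (∃ x, K x = u) → (∃ x, K x = v) → u ≠ 0 →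
      v ∈ Submodule.span ℂ {u} := by
    intro u v ⟨xu, hxu⟩ ⟨xv, hxv⟩ hu
    obtain ⟨r, hr⟩ := hv₀ ⟨K xu, ⟨xu, rfl⟩⟩
    obtain ⟨s, hs⟩ := hv₀ ⟨K xv, ⟨xv, rfl⟩⟩
    have hr' : r • (v₀ : X) = u := by rw [← hxu]; exact congrArg Subtype.val hr
    have hs' : s • (v₀ : X) = v := by rw [← hxv]; exact congrArg Subtype.val hs
    have hrne : r ≠ 0 := by rintro rfl; simp at hr'; exact hu hr'.symm
    rw [← hs', ← hr']
    exact Submodule.mem_span_singleton.mpr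
      ⟨s / r, by rw [smul_smul, div_mul_cancel₀ _ hrne]⟩
  have hKy : K y = φ (D y) • y := by rw [hK, h0]; simp
  have hKCy : K (C y) = φ (D (C y)) • y - D y := by rw [hK, h1, one_smul]
  -- first claim
  have hd21 : φ (D y) = 0 := by
    by_contra hc
    have hu : K y ≠ 0 := by
      rw [hKy]
      exact smul_ne_zero hc hy0
    have hv : K (C y) ∈ Submodule.span ℂ {K y} := hdep _ _ ⟨y, rfl⟩ ⟨C y, rfl⟩ hu
    rw [hKy, hKCy] at hv
    obtain ⟨c, hc'⟩ := Submodule.mem_span_singleton.mp hv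
    rw [smul_smul] at hc'
    have hDy : D y = (φ (D (C y)) - c * φ (D y)) • y := by
      rw [sub_smul, hc']; abel
    apply hc
    rw [hDy]
    simp [h0]
  refine ⟨hd21, ?_⟩
  by_cases hspan : D y ∈ Submodule.span ℂ {y}
  · exact Or.inr hspan
  · left
    intro x hx hCx
    by_contra hne
    have hu : K x ≠ 0 := by
      rw [hK, hx]
      simpa using smul_ne_zero hne hy0
    have hv : K (C y) ∈ Submodule.span ℂ {K x} := hdep _ _ ⟨x, rfl⟩ ⟨C y, rfl⟩ hu
    rw [hK x, hx, zero_smul, sub_zero, hKCy] at hv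
    obtain ⟨c, hc'⟩ := Submodule.mem_span_singleton.mp hv
    rw [smul_smul] at hc'
    apply hspan
    have : D y = (φ (D (C y)) - c * φ (D x)) • y := by
      rw [sub_smul, hc']; abel
    rw [this]
    exact Submodule.smul_mem _ _ (Submodule.mem_span_singleton_self y)
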